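/- Let p, r be rationals with r an integer r ≥ 1 (or more generally the r-th power interpreted via formal power series). Then B_{p,1}(z)^r = B_{p,r}(z) as formal power series, i.e., the coefficient of z^m in the r-th power of B_{p,1} equals A_m(p,r). -/

import Mathlib

/-- The m-th `(p,r)`-Fuss–Catalan number. -/
def fussCatalan (p r : ℚ) : ℕ → ℚ
  | 0 => 1
  | (m + 1) =>
      r / (Nat.factorial (m + 1)) *
        ∏ i ∈ Finset.range m, ((m + 1 : ℚ) * p + r - (i + 1))

/-- The generating function `B_{p,r}(z) = ∑_{m≥0} A_m(p,r) z^m` as a formal power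
series over `ℚ`. -/
def fussCatalanGF (p r : ℚ) : PowerSeries ℚ :=
  PowerSeries.mk (fussCatalan p r)

open Polynomial in
/-- `fussCatalan p r m` as a polynomial in `r`. -/
noncomputable def fcF (p : ℚ) : ℕ → Polynomial ℚ
  | 0 => 1
  | (m + 1) =>
      C ((Nat.factorial (m + 1) : ℚ))⁻¹ * X *
        ∏ i ∈ Finset.range m, (X + C ((m + 1 : ℚ) * p - (i + 1)))

lemma fcF_eval (p r : ℚ) (m : ℕ) : (fcF p m).eval r = fussCatalan p r m := by
  cases m with
  | zero => simp [fcF, fussCatalan]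
  | succ m =>
    simp only [fcF, fussCatalan, Polynomial.eval_mul, Polynomial.eval_C, Polynomial.eval_X,
      Polynomial.eval_prod, Polynomial.eval_add]
    rw [Finset.prod_congr rfl (fun i _ => by ring :
      ∀ i ∈ Finset.range m, r + ((m + 1 : ℚ) * p - (i + 1)) = (m + 1 : ℚ) * p + r - (i + 1))]
    ring

lemma fc_zero (p : ℚ) (k : ℕ) : fussCatalan p 0 (k + 1) = 0 := by
  simp [fussCatalan]

/-- The fundamental recurrence `A_{m+1}(p,r) = A_{m+1}(p,r-1) + A_m(p,p+r-1)`. -/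
lemma fc_rec (p : ℚ) (m : ℕ) (r : ℚ) :
    fussCatalan p r (m + 1) = fussCatalan p (r - 1) (m + 1) + fussCatalan p (p + r - 1) m := by
  cases m with
  | zero => simp [fussCatalan]
  | succ n =>
    simp only [fussCatalan]
    rw [Finset.prod_range_succ', Finset.prod_range_succ]
    have e1 : ∀ i ∈ Finset.range n, ((n + 1 : ℕ) + 1 : ℚ) * p + r - ((i + 1 : ℕ) + 1)
        = (n : ℚ) * p + 2 * p + r - 2 - i := fun i _ => by push_cast; ring
    have e2 : ∀ i ∈ Finset.range n, ((n + 1 : ℕ) + 1 : ℚ) * p + (r - 1) - (i + 1)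
        = (n : ℚ) * p + 2 * p + r - 2 - i := fun i _ => by push_cast; ring
    have e3 : ∀ i ∈ Finset.range n, ((n : ℕ) + 1 : ℚ) * p + (p + r - 1) - (i + 1)
        = (n : ℚ) * p + 2 * p + r - 2 - i := fun i _ => by push_cast; ring
    rw [Finset.prod_congr rfl e1, Finset.prod_congr rfl e2, Finset.prod_congr rfl e3]
    generalize (∏ i ∈ Finset.range n, ((n : ℚ) * p + 2 * p + r - 2 - i)) = Q
    have h1 : ((Nat.factorial (n + 1 + 1) : ℚ)) = ((n : ℚ) + 2) * (Nat.factorial (n + 1)) := by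
      push_cast [Nat.factorial_succ]; ring
    have h2 : (Nat.factorial (n + 1) : ℚ) ≠ 0 := by positivity
    have h3 : ((n : ℚ) + 2) ≠ 0 := by positivity
    rw [h1]
    field_simp
    push_cast
    ring

/-- The key convolution identity `∑_k A_k(p,r) A_{m-k}(p,1) = A_m(p,r+1)`. -/
lemma fc_conv (p : ℚ) (m : ℕ) (r : ℚ) :
    ∑ k ∈ Finset.range (m + 1), fussCatalan p r k * fussCatalan p 1 (m - k)
      = fussCatalan p (r + 1) m := by
  induction m generalizing r with
  | zero => simp [fussCatalan]
  | succ m IH =>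
    -- the difference polynomial
    set D : Polynomial ℚ :=
      (∑ k ∈ Finset.range (m + 2), Polynomial.C (fussCatalan p 1 (m + 1 - k)) * fcF p k)
        - (fcF p (m + 1)).comp (Polynomial.X + Polynomial.C 1) with hD
    have hevalD : ∀ s : ℚ, D.eval s =
        (∑ k ∈ Finset.range (m + 2), fussCatalan p s k * fussCatalan p 1 (m + 1 - k))
          - fussCatalan p (s + 1) (m + 1) := by
      intro s
      simp [hD, Polynomial.eval_finset_sum, Polynomial.eval_comp, fcF_eval, mul_comm]
    -- step: D s = D (s-1)
    have hstep : ∀ s : ℚ, D.eval s = D.eval (s - 1) := by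
      intro s
      rw [hevalD, hevalD]
      have hL : ∑ k ∈ Finset.range (m + 2), fussCatalan p s k * fussCatalan p 1 (m + 1 - k)
          = (∑ k ∈ Finset.range (m + 2), fussCatalan p (s - 1) k * fussCatalan p 1 (m + 1 - k))
            + fussCatalan p (p + s) m := by
        rw [Finset.sum_range_succ' (fun k => fussCatalan p s k * fussCatalan p 1 (m + 1 - k)),
            Finset.sum_range_succ' (fun k => fussCatalan p (s - 1) k * fussCatalan p 1 (m + 1 - k))]
        have h0 : fussCatalan p s 0 = fussCatalan p (s - 1) 0 := rfl
        have hterm : ∀ k, fussCatalan p s (k + 1) * fussCatalan p 1 (m + 1 - (k + 1))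
            = fussCatalan p (s - 1) (k + 1) * fussCatalan p 1 (m + 1 - (k + 1))
              + fussCatalan p (p + s - 1) k * fussCatalan p 1 (m - k) := by
          intro k
          have : (m + 1 - (k + 1)) = m - k := by omega
          rw [this, fc_rec p k s, add_mul]
        have hsum : ∑ k ∈ Finset.range (m + 1),
              fussCatalan p s (k + 1) * fussCatalan p 1 (m + 1 - (k + 1))
            = (∑ k ∈ Finset.range (m + 1),
                fussCatalan p (s - 1) (k + 1) * fussCatalan p 1 (m + 1 - (k + 1)))
              + ∑ k ∈ Finset.range (m + 1), fussCatalan p (p + s - 1) k * fussCatalan p 1 (m - k) := by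
          rw [← Finset.sum_add_distrib]
          exact Finset.sum_congr rfl fun k _ => hterm k
        rw [hsum, IH (p + s - 1), h0]
        have : p + s - 1 + 1 = p + s := by ring
        rw [this]; ring
      have hR : fussCatalan p (s + 1) (m + 1)
          = fussCatalan p (s - 1 + 1) (m + 1) + fussCatalan p (p + s) m := by
        have := fc_rec p m (s + 1)
        have h1 : s + 1 - 1 = s - 1 + 1 := by ring
        have h2 : p + (s + 1) - 1 = p + s := by ring
        rw [h1, h2] at this
        exact this
      rw [hL, hR]; ring
    -- D vanishes at all naturals
    have hnat : ∀ n : ℕ, D.eval (n : ℚ) = 0 := by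
      intro n
      induction n with
      | zero =>
        rw [hevalD]
        push_cast
        rw [Finset.sum_range_succ' (fun k => fussCatalan p 0 k * fussCatalan p 1 (m + 1 - k))]
        simp [fc_zero, fussCatalan]
      | succ n IHn =>
        have := hstep ((n : ℚ) + 1)
        push_cast
        rw [this]
        simpa using IHn
    -- hence D = 0
    have hD0 : D = 0 := by
      apply Polynomial.eq_zero_of_infinite_isRoot
      apply Set.Infinite.mono (s := Set.range (Nat.cast : ℕ → ℚ))
      · rintro x ⟨n, rfl⟩; exact hnat n
      · exact Set.infinite_range_of_injective Nat.cast_injective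
    have := hevalD r
    rw [hD0] at this
    simp only [Polynomial.eval_zero] at this
    linarith

/-- For an integer `r ≥ 1`, `B_{p,1}(z)^r = B_{p,r}(z)` as formal power series:
the coefficient of `z^m` in the `r`-th power of `B_{p,1}` equals `A_m(p,r)`. -/
theorem fussCatalanGF_pow (p : ℚ) (r : ℕ) (hr : 1 ≤ r) :
    (fussCatalanGF p 1) ^ r = fussCatalanGF p (r : ℚ) := by
  induction r, hr using Nat.le_induction with
  | base => norm_num
  | succ n hn IH =>
    rw [pow_succ, IH]
    ext m
    rw [PowerSeries.coeff_mul]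
    simp only [fussCatalanGF, PowerSeries.coeff_mk]
    rw [Finset.Nat.sum_antidiagonal_eq_sum_range_succ_mk]
    simp only [PowerSeries.coeff_mk]
    rw [fc_conv]
    push_cast
    ring_nf
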